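/- Let π be a uniformly random bijection E → {1,…,m} on the edge set of a finite hypergraph H = (V,E), run the sequential greedy matching on π, and let d_1,…,d_m be a fixed (adversarially chosen but π-independent) deletion order listing all edges of E. Then for every t ∈ {1,…,m}, if the event that the deletion of d_t is early has positive probability, the conditional expectation of the payment satisfies E[Φ(d_t) | d_t is early] ≤ 2. -/
import Mathlib


/-!
For a uniformly random priority bijection `π : E ≃ Fin m` and a fixed
(`π`-independent) deletion order `d₁,…,d_m` listing all edges, for every time
`t`, if the event "the deletion of `d_t` is early" has positive probability,
then the conditional expectation of the payment satisfies
`𝔼[Φ(d_t) ∣ d_t is early] ≤ 2`.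

The deletion of `d_t` is early if its owner `p(d_t)` is not among
`d₁,…,d_{t-1}`; `U(d_t) = S_{p(d_t)} \ {d₁,…,d_{t-1}}`; the payment is
`Φ(d_t) = 1` if `d_t` is early and `d_t ≠ p(d_t)`, and `Φ(d_t) = |U(d_t)|`
if `d_t = p(d_t)`.
-/

open Finset

open scoped Classical

variable {V E : Type*}

/-- Two hyperedges are incident if they share a vertex. -/
def Incident [DecidableEq V] (vert : E → Finset V) (e f : E) : Prop :=
  (vert e ∩ vert f).Nonempty

/-- `Matched vert π e` holds iff the sequential greedy matching (processing the
edges in increasing `π`-order, selecting an edge iff it is still free when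
processed) selects `e`. -/
def Matched [DecidableEq V] (vert : E → Finset V) (π : E → ℕ) (e : E) : Prop :=
  ∀ f, π f < π e → Incident vert f e → ¬ Matched vert π f
termination_by π e

/-- The matched edge owning `e` (the `π`-least matched edge incident to `e`),
i.e. the matched edge `p(e)` whose sample space `e` belongs to. -/
noncomputable def owner [DecidableEq V] (vert : E → Finset V) (π : E → ℕ) (e : E) : E :=
  if h : ∃ f, (Matched vert π f ∧ Incident vert f e) ∧
      ∀ f', Matched vert π f' → Incident vert f' e → π f ≤ π f' then
    h.choose
  else e

/-- The deletion of `d_t` (the `t`-th deleted edge, `d_t = del t`) is early if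
its matched edge `p(d_t)` is not among the previously deleted `d₁,…,d_{t-1}`. -/
def EarlyAt [DecidableEq V] (vert : E → Finset V) (π : E → ℕ) {m : ℕ}
    (del : Fin m ≃ E) (t : Fin m) : Prop :=
  ∀ s : Fin m, s < t → del s ≠ owner vert π (del t)

/-- `U(d_t) = S_{p(d_t)} \ {d₁,…,d_{t-1}}`:  the edges of the sample space of
`p(d_t)` not yet deleted just before time `t`. -/
noncomputable def Uset [DecidableEq V] [DecidableEq E] [Fintype E]
    (vert : E → Finset V) (π : E → ℕ) {m : ℕ} (del : Fin m ≃ E) (t : Fin m) : Finset E :=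
  Finset.univ.filter fun e =>
    owner vert π e = owner vert π (del t) ∧ ∀ s : Fin m, s < t → del s ≠ e

/-- The payment `Φ'(d_t)`:  `1` if the deletion of `d_t` is early and
`d_t ≠ p(d_t)`, `|U(d_t)|` if `d_t = p(d_t)` (such a deletion is early), and
`0` if the deletion is late. -/
noncomputable def payment [DecidableEq V] [DecidableEq E] [Fintype E]
    (vert : E → Finset V) (π : E → ℕ) {m : ℕ} (del : Fin m ≃ E) (t : Fin m) : ℕ :=
  if EarlyAt vert π del t then
    (if del t = owner vert π (del t) then (Uset vert π del t).card else 1)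
  else 0


lemma matched_iff [DecidableEq V] (vert : E → Finset V) (p : E → ℕ) (e : E) :
    Matched vert p e ↔ ∀ f, p f < p e → Incident vert f e → ¬ Matched vert p f := by
  rw [Matched]

lemma incident_self' [DecidableEq V] (vert : E → Finset V) (hne : ∀ e : E, (vert e).Nonempty)
    (e : E) : Incident vert e e := by
  simpa [Incident] using hne e

lemma incident_symm' [DecidableEq V] (vert : E → Finset V) {e f : E}
    (h : Incident vert e f) : Incident vert f e := by
  rwa [Incident, Finset.inter_comm]

lemma matched_congr [DecidableEq V] (vert : E → Finset V) (p q : E → ℕ) (k : ℕ)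
    (h : ∀ f, p f < k ∨ q f < k → p f = q f) :
    ∀ e, p e < k → (Matched vert p e ↔ Matched vert q e) := by
  suffices H : ∀ n e, p e = n → p e < k → (Matched vert p e ↔ Matched vert q e) by
    exact fun e he => H (p e) e rfl he
  intro n
  induction n using Nat.strong_induction_on with
  | _ n ih =>
    intro e hpe hek
    have heq : p e = q e := h e (Or.inl hek)
    rw [matched_iff vert p, matched_iff vert q]
    constructor
    · intro H g hg hinc hm
      have hqk : q g < k := by omega
      have hpg : p g = q g := h g (Or.inr hqk)
      exact H g (by omega) hinc ((ih (p g) (by omega) g rfl (by omega)).mpr hm)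
    · intro H g hg hinc hm
      have hpk : p g < k := by omega
      have hpg : p g = q g := h g (Or.inl hpk)
      exact H g (by omega) hinc ((ih (p g) (by omega) g rfl (by omega)).mp hm)

lemma owner_spec [DecidableEq V] [Fintype E] (vert : E → Finset V)
    (hne : ∀ e : E, (vert e).Nonempty) (p : E → ℕ) (e : E) :
    Matched vert p (owner vert p e) ∧ Incident vert (owner vert p e) e ∧
      ∀ f, Matched vert p f → Incident vert f e → p (owner vert p e) ≤ p f := by
  have hs : (Finset.univ.filter fun f => Matched vert p f ∧ Incident vert f e).Nonempty := by
    by_cases hM : Matched vert p e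
    · exact ⟨e, by simp [hM, incident_self' vert hne]⟩
    · rw [matched_iff] at hM
      push_neg at hM
      obtain ⟨f, h1, h2, h3⟩ := hM
      exact ⟨f, by simp [h2, h3]⟩
  obtain ⟨f, hf, hmin⟩ := Finset.exists_min_image _ p hs
  simp only [Finset.mem_filter, Finset.mem_univ, true_and] at hf
  have hex : ∃ f, (Matched vert p f ∧ Incident vert f e) ∧
      ∀ f', Matched vert p f' → Incident vert f' e → p f ≤ p f' := by
    refine ⟨f, hf, fun f' h1 h2 => hmin f' (by simp [h1, h2])⟩
  rw [owner, dif_pos hex]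
  obtain ⟨⟨h1, h2⟩, h3⟩ := hex.choose_spec
  exact ⟨h1, h2, h3⟩

lemma owner_eq_of [DecidableEq V] [Fintype E] (vert : E → Finset V)
    (hne : ∀ e : E, (vert e).Nonempty) {p : E → ℕ} (hinj : Function.Injective p) {e f : E}
    (hf : Matched vert p f) (hfi : Incident vert f e)
    (hmin : ∀ f', Matched vert p f' → Incident vert f' e → p f ≤ p f') :
    owner vert p e = f := by
  obtain ⟨h1, h2, h3⟩ := owner_spec vert hne p e
  exact hinj (le_antisymm (h3 f hf hfi) (hmin _ h1 h2))

lemma swap_owner [DecidableEq V] [Fintype E] [DecidableEq E] {m : ℕ}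
    (vert : E → Finset V) (hne : ∀ e : E, (vert e).Nonempty)
    (del : Fin m ≃ E) (t : Fin m) (π' : E ≃ Fin m)
    (h2 : del t = owner vert (fun x => ((π' x : ℕ))) (del t))
    (e : E) (he : e ∈ Uset vert (fun x => ((π' x : ℕ))) del t) (hed : e ≠ del t) :
    owner vert (fun x => ((((Equiv.swap (del t) e).trans π') x : ℕ))) (del t) = e := by
  set p : E → ℕ := fun x => ((π' x : ℕ)) with hp
  set q : E → ℕ := fun x => ((((Equiv.swap (del t) e).trans π') x : ℕ)) with hq
  have hpinj : Function.Injective p := fun a b h => π'.injective (Fin.val_injective h)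
  have hqinj : Function.Injective q := fun a b h =>
    (Equiv.swap (del t) e).injective (π'.injective (Fin.val_injective h))
  set k : ℕ := p (del t) with hk
  simp only [Uset, Finset.mem_filter, Finset.mem_univ, true_and] at he
  have howne : owner vert p e = del t := he.1.trans h2.symm
  obtain ⟨hMdt', hIdt, hmindt⟩ := owner_spec vert hne p (del t)
  rw [← h2] at hMdt' hmindt
  obtain ⟨hMe', hIe, hmine⟩ := owner_spec vert hne p e
  rw [howne] at hMe' hIe hmine
  have hfree_e : ∀ g, p g < k → Incident vert g e → ¬ Matched vert p g := by
    intro g hg hginc hgm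
    exact absurd (hmine g hgm hginc) (by omega)
  have hke : k < p e := by
    rcases lt_trichotomy k (p e) with h | h | h
    · exact h
    · exact absurd (hpinj h) (Ne.symm hed)
    · exfalso
      by_cases hM : Matched vert p e
      · exact absurd (hmine e hM (incident_self' vert hne e)) (by omega)
      · rw [matched_iff] at hM
        push_neg at hM
        obtain ⟨g, hg1, hg2, hg3⟩ := hM
        exact hfree_e g (by omega) hg2 hg3
  have hqdt : q (del t) = p e := by simp [hq, hp, Equiv.swap_apply_left]
  have hqe : q e = k := by simp [hq, hp, hk, Equiv.swap_apply_right]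
  have hagree : ∀ f, p f < k ∨ q f < k → p f = q f := by
    intro f hf
    by_cases h1 : f = del t
    · subst h1; exfalso; rw [hqdt] at hf; omega
    by_cases h2' : f = e
    · subst h2'; exfalso; rw [hqe] at hf; omega
    · simp [hq, hp, Equiv.swap_apply_of_ne_of_ne h1 h2']
  have hcongr := matched_congr vert p q k hagree
  have hMe : Matched vert q e := by
    rw [matched_iff]
    intro g hg hginc hgm
    rw [hqe] at hg
    have hg1 : g ≠ del t := by intro h; rw [h, hqdt] at hg; omega
    have hg2 : g ≠ e := by intro h; rw [h, hqe] at hg; omega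
    have hpg : p g = q g := by simp [hq, hp, Equiv.swap_apply_of_ne_of_ne hg1 hg2]
    exact hfree_e g (by omega) hginc ((hcongr g (by omega)).mpr hgm)
  have hmin : ∀ f, Matched vert q f → Incident vert f (del t) → q e ≤ q f := by
    intro f hfm hfi
    by_contra hlt
    push_neg at hlt
    rw [hqe] at hlt
    have hf1 : f ≠ del t := by intro h; rw [h, hqdt] at hlt; omega
    have hf2 : f ≠ e := by intro h; rw [h, hqe] at hlt; omega
    have hpf : p f = q f := by simp [hq, hp, Equiv.swap_apply_of_ne_of_ne hf1 hf2]
    have hfm' : Matched vert p f := (hcongr f (by omega)).mpr hfm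
    rw [matched_iff] at hMdt'
    exact hMdt' f (by omega) hfi hfm'
  exact owner_eq_of vert hne hqinj hMe (incident_symm' vert hIe) hmin

theorem stmt5 [DecidableEq V] [Fintype E] [DecidableEq E] {m : ℕ}
    (vert : E → Finset V) (hne : ∀ e : E, (vert e).Nonempty)
    (hm : Fintype.card E = m) (del : Fin m ≃ E) (t : Fin m) :
    let A : Finset (E ≃ Fin m) :=
      Finset.univ.filter fun π : E ≃ Fin m => EarlyAt vert (fun e => (π e : ℕ)) del t
    -- if the event that the deletion of `d_t` is early has positive probability,
    A.Nonempty →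
    -- then the conditional expectation of the payment is at most `2`
    (∑ π ∈ A, (payment vert (fun e => (π e : ℕ)) del t : ℝ)) / (A.card : ℝ) ≤ 2 := by
  intro A hA
  classical
  set P : (E ≃ Fin m) → Prop :=
    fun π => del t = owner vert (fun e => ((π e : ℕ))) (del t) with hP
  set A₂ := A.filter P with hA2
  set A₁ := A.filter (fun π => ¬ P π) with hA1
  have hmemA : ∀ π : E ≃ Fin m, π ∈ A ↔ EarlyAt vert (fun e => ((π e : ℕ))) del t := by
    intro π; simp [A]
  -- the sigma set of (π', e) pairs
  set T := A₂.sigma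
    (fun π' => (Uset vert (fun e => ((π' e : ℕ))) del t).erase (del t)) with hT
  set F : (Σ _ : E ≃ Fin m, E) → (E ≃ Fin m) :=
    fun x => (Equiv.swap (del t) x.2).trans x.1 with hF
  have hmemT : ∀ x : (Σ _ : E ≃ Fin m, E), x ∈ T →
      x.1 ∈ A₂ ∧ x.2 ∈ Uset vert (fun e => ((x.1 e : ℕ))) del t ∧ x.2 ≠ del t := by
    intro x hx
    rw [hT, Finset.mem_sigma] at hx
    obtain ⟨h1, h2⟩ := hx
    rw [Finset.mem_erase] at h2
    exact ⟨h1, h2.2, h2.1⟩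
  have hown : ∀ x : (Σ _ : E ≃ Fin m, E), x ∈ T →
      owner vert (fun e => ((F x e : ℕ))) (del t) = x.2 := by
    intro x hx
    obtain ⟨h1, h2, h3⟩ := hmemT x hx
    rw [hA2, Finset.mem_filter] at h1
    exact swap_owner vert hne del t x.1 h1.2 x.2 h2 h3
  have hmap : ∀ x ∈ T, F x ∈ A₁ := by
    intro x hx
    obtain ⟨h1, h2, h3⟩ := hmemT x hx
    have ho := hown x hx
    simp only [Uset, Finset.mem_filter, Finset.mem_univ, true_and] at h2
    rw [hA1, Finset.mem_filter]
    refine ⟨(hmemA _).mpr ?_, ?_⟩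
    · intro s hs
      rw [ho]
      exact h2.2 s hs
    · rw [hP]
      simp only
      rw [ho]
      exact fun h => h3 h.symm
  have hinj : Set.InjOn F T := by
    intro x hx y hy hxy
    have he : x.2 = y.2 := by
      rw [← hown x hx, ← hown y hy, hxy]
    obtain ⟨π₁, e₁⟩ := x
    obtain ⟨π₂, e₂⟩ := y
    simp only at he
    subst he
    have hpi : π₁ = π₂ := by
      ext z
      have h1 : π₁ z = F ⟨π₁, e₁⟩ (Equiv.swap (del t) e₁ z) := by
        simp [hF, Equiv.swap_apply_self]
      have h2 : π₂ z = F ⟨π₂, e₁⟩ (Equiv.swap (del t) e₁ z) := by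
        simp [hF, Equiv.swap_apply_self]
      rw [h1, h2, hxy]
    subst hpi
    rfl
  have hcardT : T.card ≤ A₁.card := Finset.card_le_card_of_injOn F hmap hinj
  -- del t belongs to Uset for π ∈ A₂
  have hdtU : ∀ π' ∈ A₂, del t ∈ Uset vert (fun e => ((π' e : ℕ))) del t := by
    intro π' _
    simp only [Uset, Finset.mem_filter, Finset.mem_univ, true_and]
    exact fun s hs h => absurd (del.injective h) (Fin.ne_of_lt hs)
  have hTcard : ∑ π' ∈ A₂, (Uset vert (fun e => ((π' e : ℕ))) del t).card = T.card + A₂.card := by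
    rw [hT, Finset.card_sigma, Finset.card_eq_sum_ones A₂, ← Finset.sum_add_distrib]
    exact Finset.sum_congr rfl fun π' hπ' => (Finset.card_erase_add_one (hdtU π' hπ')).symm
  -- the sum of payments in ℕ
  have hpay : ∀ π ∈ A, payment vert (fun e => ((π e : ℕ))) del t =
      if P π then (Uset vert (fun e => ((π e : ℕ))) del t).card else 1 := by
    intro π hπ
    rw [payment, if_pos ((hmemA π).mp hπ)]
  have hsplit : ∑ π ∈ A, payment vert (fun e => ((π e : ℕ))) del t =
      (∑ π ∈ A₂, (Uset vert (fun e => ((π e : ℕ))) del t).card) + A₁.card := by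
    rw [Finset.sum_congr rfl hpay, Finset.sum_ite, ← hA2, ← hA1]
    simp
  have hAcard : A₂.card + A₁.card = A.card := by
    rw [hA2, hA1]
    exact Finset.card_filter_add_card_filter_not (p := P)
  have hN : ∑ π ∈ A, payment vert (fun e => ((π e : ℕ))) del t ≤ 2 * A.card := by
    rw [hsplit, hTcard]
    omega
  have hpos : (0 : ℝ) < (A.card : ℝ) := by
    exact_mod_cast Finset.card_pos.mpr hA
  rw [div_le_iff₀ hpos]
  calc (∑ π ∈ A, (payment vert (fun e => ((π e : ℕ))) del t : ℝ))
      = ((∑ π ∈ A, payment vert (fun e => ((π e : ℕ))) del t : ℕ) : ℝ) := by push_cast; rfl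
    _ ≤ ((2 * A.card : ℕ) : ℝ) := by exact_mod_cast hN
    _ = 2 * (A.card : ℝ) := by push_cast; ring
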